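/- Let $R = k[x_1,\dots,x_m]$, let $I$ be a ${}^*$strongly Golod monomial ideal (i.e. $\partial^*(I)^2 \subseteq I$), and let $L$ be a monomial ideal such that $I : L = I : L^2$. Then $I : L$ is ${}^*$strongly Golod, i.e. $\partial^*(I : L)^2 \subseteq I : L$. -/

import Mathlib

open MvPolynomial
open Pointwise

variable {m : ℕ} {k : Type*}

/-- An ideal of `k[x_1, …, x_m]` is a monomial ideal if it is generated by monomials. -/
def IsMonomialIdeal [Field k] (I : Ideal (MvPolynomial (Fin m) k)) : Prop :=
  ∃ S : Set (Fin m →₀ ℕ), I = Ideal.span ((fun e => monomial e (1 : k)) '' S)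

/-- `e` is the exponent vector of a minimal monomial generator of `I`: the monomial `x^e`
lies in `I` and no proper divisor of it lies in `I`. -/
def IsMinMonomialGen [Field k] (I : Ideal (MvPolynomial (Fin m) k)) (e : Fin m →₀ ℕ) : Prop :=
  monomial e (1 : k) ∈ I ∧ ∀ e' : Fin m →₀ ℕ, e' ≤ e → e' ≠ e → monomial e' (1 : k) ∉ I

/-- `∂*(I)`: the ideal generated by all quotients `f / x_i`, where `f` runs over the minimal
monomial generators of `I` and `x_i` over the variables dividing `f`. -/
noncomputable def partialStar [Field k] (I : Ideal (MvPolynomial (Fin m) k)) :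
    Ideal (MvPolynomial (Fin m) k) :=
  Ideal.span { p | ∃ (e : Fin m →₀ ℕ) (i : Fin m), IsMinMonomialGen I e ∧ e i ≠ 0 ∧
    p = monomial (e - Finsupp.single i 1) (1 : k) }

/-- Any monomial in an ideal is divisible by a minimal monomial generator. -/
theorem exists_min_gen [Field k] (I : Ideal (MvPolynomial (Fin m) k)) (s : Fin m →₀ ℕ)
    (hs : monomial s (1 : k) ∈ I) : ∃ w, w ≤ s ∧ IsMinMonomialGen I w := by
  induction s using WellFoundedLT.induction with
  | _ s ih =>
    by_cases h : ∀ e' : Fin m →₀ ℕ, e' ≤ s → e' ≠ s → monomial e' (1 : k) ∉ I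
    · exact ⟨s, le_refl s, hs, h⟩
    · push_neg at h
      obtain ⟨e', hle, hne, hmem⟩ := h
      obtain ⟨w, hw, hmin⟩ := ih e' (lt_of_le_of_ne hle hne) hmem
      exact ⟨w, hw.trans hle, hmin⟩

/-- divisibility: if `w' ≤ a` and `x^{w'}` is in an ideal, so is `x^a`. -/
theorem monomial_mem_of_le [Field k] (J : Ideal (MvPolynomial (Fin m) k))
    {w' a : Fin m →₀ ℕ} (h : w' ≤ a) (hm : monomial w' (1 : k) ∈ J) :
    monomial a (1 : k) ∈ J := by
  have : monomial a (1 : k) = monomial (a - w') (1 : k) * monomial w' (1 : k) := by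
    rw [monomial_mul, one_mul, tsub_add_cancel_of_le h]
  rw [this]
  exact Ideal.mul_mem_left _ _ hm

/-- Key lemma: `x^{(e - δᵢ) + t} ∈ ∂*(I)`. -/
theorem key_lemma [Field k] (I L : Ideal (MvPolynomial (Fin m) k))
    (hI : IsMonomialIdeal I) (h1 : (1 : MvPolynomial (Fin m) k) ∉ I)
    {e : Fin m →₀ ℕ} {i : Fin m} (he : IsMinMonomialGen (Submodule.colon I L) e)
    (hei : e i ≠ 0) {t : Fin m →₀ ℕ} (ht : monomial t (1 : k) ∈ L) :
    monomial ((e - Finsupp.single i 1) + t) (1 : k) ∈ partialStar I := by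
  obtain ⟨S, hS⟩ := hI
  -- x^{e+t} ∈ I
  have hIet : monomial (e + t) (1 : k) ∈ I := by
    have := Submodule.mem_colon.mp he.1 _ ht
    rwa [smul_eq_mul, monomial_mul, one_mul] at this
  -- find s ∈ S with s ≤ e + t
  obtain ⟨s, hsS, hsle⟩ := by
    have := (hS ▸ hIet)
    rw [mem_ideal_span_monomial_image] at this
    exact this (e + t) (by rw [mem_support_iff, coeff_monomial, if_pos rfl]; exact one_ne_zero)
  have hsI : monomial s (1 : k) ∈ I := hS ▸ Ideal.subset_span ⟨s, hsS, rfl⟩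
  obtain ⟨w, hws, hwmin⟩ := exists_min_gen I s hsI
  have hwle : w ≤ e + t := hws.trans hsle
  have hw0 : w ≠ 0 := by
    rintro rfl
    exact h1 (by simpa using hwmin.1)
  -- goal exponent
  set a := (e - Finsupp.single i 1) + t with ha
  have hai : ∀ j, j ≠ i → w j ≤ a j := by
    intro j hj
    have : a j = (e j - (Finsupp.single i 1) j) + t j := by
      simp [ha, Finsupp.tsub_apply]
    rw [this, Finsupp.single_apply, if_neg (fun h => hj h.symm)]
    simpa using hwle j
  by_cases hcase : w i ≤ a i
  · -- w ≤ a, so x^a ∈ (x^w) ⊆ I ⊆ ∂*I via w - δ_{i0}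
    have hwa : w ≤ a := by
      intro j
      by_cases hji : j = i
      · subst hji; exact hcase
      · exact hai j hji
    obtain ⟨i0, hi0⟩ : ∃ i0, w i0 ≠ 0 := by
      by_contra h
      push_neg at h
      exact hw0 (Finsupp.ext fun j => h j)
    have hgen : monomial (w - Finsupp.single i0 1) (1 : k) ∈ partialStar I :=
      Ideal.subset_span ⟨w, i0, hwmin, hi0, rfl⟩
    exact monomial_mem_of_le _ ((tsub_le_self).trans hwa) hgen
  · -- w i = e i + t i, use w - δᵢ
    push_neg at hcase
    have hwi : w i ≠ 0 := by
      have : a i = (e i - 1) + t i := by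
        simp [ha, Finsupp.tsub_apply, Finsupp.single_apply]
      omega
    have hgen : monomial (w - Finsupp.single i 1) (1 : k) ∈ partialStar I :=
      Ideal.subset_span ⟨w, i, hwmin, hwi, rfl⟩
    have hle : w - Finsupp.single i 1 ≤ a := by
      intro j
      rw [Finsupp.tsub_apply]
      by_cases hji : j = i
      · subst hji
        have h1' : a j = (e j - 1) + t j := by
          simp [ha, Finsupp.tsub_apply, Finsupp.single_apply]
        have h2' : w j ≤ e j + t j := hwle j
        rw [h1', Finsupp.single_eq_same]
        omega
      · rw [Finsupp.single_apply, if_neg (fun h => hji h.symm)]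
        simpa using hai j hji
    exact monomial_mem_of_le _ hle hgen

/-- If `I` is a `*`strongly Golod monomial ideal and `L` a monomial ideal with
`I : L = I : L²`, then `I : L` is `*`strongly Golod. -/
theorem colon_strongly_golod [Field k] (I L : Ideal (MvPolynomial (Fin m) k))
    (hI : IsMonomialIdeal I) (hL : IsMonomialIdeal L)
    (hsg : partialStar I * partialStar I ≤ I)
    (hcolon : Submodule.colon I L = Submodule.colon I (L ^ 2 : Ideal (MvPolynomial (Fin m) k))) :
    partialStar (Submodule.colon I L) * partialStar (Submodule.colon I L)
      ≤ Submodule.colon I L := by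
  by_cases h1 : (1 : MvPolynomial (Fin m) k) ∈ I
  · intro x _
    exact Submodule.mem_colon.mpr fun p _ => (Ideal.eq_top_iff_one I).mpr h1 ▸ Submodule.mem_top
  obtain ⟨T, hT⟩ := hL
  rw [partialStar, Ideal.span_mul_span', Ideal.span_le]
  rintro x hx
  rw [Set.mem_mul] at hx
  obtain ⟨p, hp, q, hq, rfl⟩ := hx
  obtain ⟨e, i, hemin, hei, rfl⟩ := hp
  obtain ⟨f, j, hfmin, hfj, rfl⟩ := hq
  show _ ∈ Submodule.colon I L
  rw [hcolon, Submodule.mem_colon]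
  -- L² = span of products of monomials
  have hL2 : L ^ 2 = Ideal.span (((fun e => monomial e (1 : k)) '' T) *
      ((fun e => monomial e (1 : k)) '' T)) := by
    rw [sq, hT, Ideal.span_mul_span']
  intro p hp
  rw [hL2] at hp
  induction hp using Submodule.span_induction with
  | mem g hg =>
    obtain ⟨a, ⟨t, htT, rfl⟩, b, ⟨t', ht'T, rfl⟩, rfl⟩ := hg
    have htL : monomial t (1 : k) ∈ L := hT ▸ Ideal.subset_span ⟨t, htT, rfl⟩
    have ht'L : monomial t' (1 : k) ∈ L := hT ▸ Ideal.subset_span ⟨t', ht'T, rfl⟩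
    have k1 := key_lemma I L hI h1 hemin hei htL
    have k2 := key_lemma I L hI h1 hfmin hfj ht'L
    have hprod := hsg (Ideal.mul_mem_mul k1 k2)
    have hexp : ((e - Finsupp.single i 1) + (f - Finsupp.single j 1)) + (t + t') =
        ((e - Finsupp.single i 1) + t) + ((f - Finsupp.single j 1) + t') := add_add_add_comm _ _ _ _
    have hsplit : (monomial (((e - Finsupp.single i 1) + t) + ((f - Finsupp.single j 1) + t'))
        (1 : k)) = monomial ((e - Finsupp.single i 1) + t) 1 *
        monomial ((f - Finsupp.single j 1) + t') 1 := by rw [monomial_mul, one_mul]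
    rw [smul_eq_mul]
    simp only [monomial_mul, one_mul]
    rw [hexp, hsplit]
    exact hprod
  | zero => simp
  | add a b _ _ ha hb => rw [smul_add]; exact Submodule.add_mem _ ha hb
  | smul c a _ ha =>
    rw [smul_comm]
    exact Submodule.smul_mem _ _ ha
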